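/- Let L be a Lie algebra over an algebraically closed field, δ ∈ K, and D a δ-derivation of L. If x ∈ L is an eigenvector of D with eigenvalue λ and y ∈ L is an eigenvector with eigenvalue μ, then (D − δ(λ+μ))^n ([x,y]) = 0 for sufficiently large n; more precisely, the generalized eigenspace bracket rule [L_λ, L_μ] ⊆ L_{δ(λ+μ)} holds for the generalized eigenspace decomposition with respect to D. -/

import Mathlib

private lemma delta_deriv_key (K L : Type*) [Field K]
    [LieRing L] [LieAlgebra K L]
    (δ : K) (D : Module.End K L)
    (hD : ∀ x y : L, D ⁅x, y⁆ = δ • ⁅D x, y⁆ + δ • ⁅x, D y⁆)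
    (lam mu : K) :
    ∀ (n p q : ℕ) (x y : L), p + q = n →
      ((D - lam • (1 : Module.End K L)) ^ p) x = 0 →
      ((D - mu • (1 : Module.End K L)) ^ q) y = 0 →
      ((D - (δ * (lam + mu)) • (1 : Module.End K L)) ^ n) ⁅x, y⁆ = 0 := by
  set A := D - lam • (1 : Module.End K L)
  set B := D - mu • (1 : Module.End K L)
  set C := D - (δ * (lam + mu)) • (1 : Module.End K L)
  have hstep : ∀ a b : L, C ⁅a, b⁆ = δ • ⁅A a, b⁆ + δ • ⁅a, B b⁆ := by
    intro a b
    simp only [A, B, C, LinearMap.sub_apply, LinearMap.smul_apply, Module.End.one_apply,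
      sub_lie, lie_sub, smul_lie, lie_smul, smul_sub, hD a b]
    rw [smul_smul, mul_add]
    module
  intro n
  induction n with
  | zero =>
    intro p q x y hpq hx hy
    obtain ⟨rfl, rfl⟩ : p = 0 ∧ q = 0 := by omega
    simp only [pow_zero, Module.End.one_apply] at hx ⊢
    rw [hx, zero_lie]
  | succ n ih =>
    intro p q x y hpq hx hy
    rcases Nat.eq_zero_or_pos p with rfl | hp
    · simp only [pow_zero, Module.End.one_apply] at hx
      rw [hx, zero_lie, map_zero]
    rcases Nat.eq_zero_or_pos q with rfl | hq
    · simp only [pow_zero, Module.End.one_apply] at hy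
      rw [hy, lie_zero, map_zero]
    obtain ⟨p', rfl⟩ : ∃ p', p = p' + 1 := ⟨p - 1, by omega⟩
    obtain ⟨q', rfl⟩ : ∃ q', q = q' + 1 := ⟨q - 1, by omega⟩
    rw [pow_succ, Module.End.mul_apply, hstep, map_add, map_smul, map_smul]
    have h1 : (C ^ n) ⁅A x, y⁆ = 0 := by
      apply ih p' (q' + 1) (A x) y (by omega)
      · rw [← Module.End.mul_apply, ← pow_succ]; exact hx
      · exact hy
    have h2 : (C ^ n) ⁅x, B y⁆ = 0 := by
      apply ih (p' + 1) q' x (B y) (by omega)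
      · exact hx
      · rw [← Module.End.mul_apply, ← pow_succ]; exact hy
    rw [h1, h2]; simp

/-- For a δ-derivation `D` of a finite-dimensional Lie algebra over an
algebraically closed field, the generalized eigenspaces of `D` satisfy
`⁅L_λ, L_μ⁆ ⊆ L_{δ(λ+μ)}`; in particular, if `x`, `y` are eigenvectors of `D`
with eigenvalues `λ`, `μ`, then `(D − δ(λ+μ))^n ⁅x,y⁆ = 0` for some `n`. -/
theorem delta_derivation_genEigenspace_bracket (K L : Type*) [Field K]
    [IsAlgClosed K] [LieRing L] [LieAlgebra K L] [FiniteDimensional K L]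
    (δ : K) (D : Module.End K L)
    (hD : ∀ x y : L, D ⁅x, y⁆ = δ • ⁅D x, y⁆ + δ • ⁅x, D y⁆) :
    (∀ (lam mu : K) (x y : L), x ∈ D.maxGenEigenspace lam →
      y ∈ D.maxGenEigenspace mu →
      ⁅x, y⁆ ∈ D.maxGenEigenspace (δ * (lam + mu))) ∧
    (∀ (lam mu : K) (x y : L), D x = lam • x → D y = mu • y →
      ∃ n : ℕ, ((D - (δ * (lam + mu)) • (1 : Module.End K L)) ^ n) ⁅x, y⁆ = 0) := by
  constructor
  · intro lam mu x y hx hy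
    rw [Module.End.mem_maxGenEigenspace] at hx hy ⊢
    obtain ⟨p, hp⟩ := hx
    obtain ⟨q, hq⟩ := hy
    exact ⟨p + q, delta_deriv_key K L δ D hD lam mu (p + q) p q x y rfl hp hq⟩
  · intro lam mu x y hx hy
    refine ⟨2, delta_deriv_key K L δ D hD lam mu 2 1 1 x y rfl ?_ ?_⟩
    · simp [hx]
    · simp [hy]
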